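/- Let B be a compact Hausdorff space and H a separable complex Hilbert space. For each b ∈ B let D(b) be a self-adjoint operator on H with resolvents R₊(b) = (D(b)+i)⁻¹ and R₋(b) = (D(b)−i)⁻¹ (characterized by: R₊(b)x ∈ dom D(b) and D(b)(R₊(b)x) + i·(R₊(b)x) = x for all x ∈ H, and R₊(b)(D(b)y + i·y) = y for all y ∈ dom D(b); similarly for R₋ with −i), and assume that for every x ∈ H the maps b ↦ R₊(b)x and b ↦ R₋(b)x are continuous. For each b let K(b) be a symmetric operator with dom D(b) ⊆ dom K(b) such that the operator D(b)+K(b), with domain dom D(b), is self-adjoint with resolvents R′₊(b) = (D(b)+K(b)+i)⁻¹ and R′₋(b) = (D(b)+K(b)−i)⁻¹ (characterized analogously). Assume that for each b the bounded operator x ↦ K(b)(R₊(b)x) is compact, and that the map b ↦ K(b)R₊(b) is continuous in operator norm. Then for each b the operators R′₊(b) − R₊(b) and R′₋(b) − R₋(b) are compact, and the maps b ↦ R′₊(b) − R₊(b) and b ↦ R′₋(b) − R₋(b) are continuous in operator norm. -/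

import Mathlib

set_option linter.unusedSectionVars false
set_option linter.unusedVariables false
set_option maxHeartbeats 1000000

open ContinuousLinearMap Metric Filter

noncomputable section AuxResolvent

variable {H : Type*} [NormedAddCommGroup H] [InnerProductSpace ℂ H] [CompleteSpace H]
variable {B : Type*} [TopologicalSpace B]

lemma aux_im_zero {A : H →ₗ.[ℂ] H}
    (hA : ∀ u v : A.domain, (inner ℂ (A u) (v : H) : ℂ) = inner ℂ (u : H) (A v))
    (u : A.domain) : (inner ℂ (A u) (u : H) : ℂ).im = 0 := by
  refine Complex.conj_eq_iff_im.mp ?_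
  calc (starRingEnd ℂ) (inner ℂ (A u) (u : H) : ℂ) = inner ℂ (u : H) (A u) := inner_conj_symm _ _
  _ = inner ℂ (A u) (u : H) := (hA u u).symm

lemma aux_norm_le {A : H →ₗ.[ℂ] H}
    (hA : ∀ u v : A.domain, (inner ℂ (A u) (v : H) : ℂ) = inner ℂ (u : H) (A v))
    {c : ℂ} (hc1 : ‖c‖ = 1) (hc2 : c.re = 0)
    (u : A.domain) (x : H) (hux : A u + c • (u : H) = x) :
    ‖(u : H)‖ ≤ ‖x‖ := by
  have him := aux_im_zero hA u
  have hre : RCLike.re (inner ℂ (A u) (c • (u : H)) : ℂ) = 0 := by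
    rw [inner_smul_right]
    have : RCLike.re (c * (inner ℂ (A u) (u : H) : ℂ)) = (c * (inner ℂ (A u) (u : H) : ℂ)).re := rfl
    rw [this, Complex.mul_re, hc2, him]
    ring
  have key : ‖x‖ ^ 2 = ‖A u‖ ^ 2 + ‖(u : H)‖ ^ 2 := by
    rw [← hux, @norm_add_sq ℂ, hre, norm_smul, hc1, one_mul]
    ring
  nlinarith [norm_nonneg x, norm_nonneg ((u : H)), norm_nonneg (A u)]

lemma aux_adj {A : H →ₗ.[ℂ] H}
    (hA : ∀ u v : A.domain, (inner ℂ (A u) (v : H) : ℂ) = inner ℂ (u : H) (A v))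
    {Rp Rm : H →L[ℂ] H}
    (h1 : ∀ x : H, ∃ hx : Rp x ∈ A.domain, A ⟨Rp x, hx⟩ + Complex.I • Rp x = x)
    (h2 : ∀ x : H, ∃ hx : Rm x ∈ A.domain, A ⟨Rm x, hx⟩ - Complex.I • Rm x = x) :
    Rm = ContinuousLinearMap.adjoint Rp := by
  rw [ContinuousLinearMap.eq_adjoint_iff]
  intro x y
  obtain ⟨hu, hx⟩ := h2 x
  obtain ⟨hv, hy⟩ := h1 y
  set u' : A.domain := ⟨Rm x, hu⟩
  set v' : A.domain := ⟨Rp y, hv⟩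
  have key := hA u' v'
  conv_lhs => rw [show y = A v' + Complex.I • Rp y from hy.symm]
  conv_rhs => rw [show x = A u' - Complex.I • Rm x from hx.symm]
  simp only [inner_add_right, inner_smul_right, inner_sub_left, inner_smul_left,
    Complex.conj_I]
  have hcoe_u : ((u' : H)) = Rm x := rfl
  have hcoe_v : ((v' : H)) = Rp y := rfl
  rw [hcoe_u, hcoe_v] at key
  linear_combination -key

lemma aux_sq_le (f : H →L[ℂ] H) (u : H) :
    ‖ContinuousLinearMap.adjoint f u‖ ^ 2 ≤ ‖u‖ * ‖f (ContinuousLinearMap.adjoint f u)‖ := by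
  have h1 : (‖ContinuousLinearMap.adjoint f u‖ : ℝ) ^ 2
      = RCLike.re (inner ℂ (ContinuousLinearMap.adjoint f u) (ContinuousLinearMap.adjoint f u) : ℂ) :=
    (inner_self_eq_norm_sq _).symm
  rw [h1, ContinuousLinearMap.adjoint_inner_left]
  calc RCLike.re (inner ℂ u (f (ContinuousLinearMap.adjoint f u)) : ℂ)
      ≤ ‖(inner ℂ u (f (ContinuousLinearMap.adjoint f u)) : ℂ)‖ := RCLike.re_le_norm _
    _ ≤ ‖u‖ * ‖f (ContinuousLinearMap.adjoint f u)‖ := norm_inner_le_norm _ _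

lemma aux_adjoint_compact {f : H →L[ℂ] H} (hf : IsCompactOperator ⇑f) :
    IsCompactOperator ⇑(ContinuousLinearMap.adjoint f) := by
  set fa := ContinuousLinearMap.adjoint f with hfa
  set g : H →L[ℂ] H := f ∘L fa with hgdef
  have hg : IsCompactOperator ⇑g := hf.comp_clm fa
  have htb : TotallyBounded (⇑fa '' Metric.closedBall 0 1) := by
    rw [Metric.totallyBounded_iff]
    intro ε hε
    have hS : TotallyBounded (⇑g '' Metric.closedBall 0 1) :=
      (hg.isCompact_closure_image_closedBall 1).totallyBounded.subset subset_closure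
    obtain ⟨t, htsub, htfin, hcover⟩ := totallyBounded_iff_subset.mp hS
      {p : H × H | dist p.1 p.2 < ε ^ 2 / 4} (dist_mem_uniformity (by positivity))
    have hchoice : ∀ z : H, ∃ w : H, z ∈ t → w ∈ Metric.closedBall (0 : H) 1 ∧ g w = z := by
      intro z
      by_cases hz : z ∈ t
      · obtain ⟨w, hw1, hw2⟩ := htsub hz
        exact ⟨w, fun _ => ⟨hw1, hw2⟩⟩
      · exact ⟨0, fun h => absurd h hz⟩
    choose y hy using hchoice
    refine ⟨(fun z => fa (y z)) '' t, htfin.image _, ?_⟩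
    rintro - ⟨x, hx, rfl⟩
    have hgx : g x ∈ ⋃ z ∈ t, {w | (w, z) ∈ {p : H × H | dist p.1 p.2 < ε ^ 2 / 4}} :=
      hcover (Set.mem_image_of_mem _ hx)
    simp only [Set.mem_iUnion, Set.mem_setOf_eq] at hgx
    obtain ⟨z, hzt, hdz⟩ := hgx
    obtain ⟨hy1, hy2⟩ := hy z hzt
    refine Set.mem_iUnion₂.mpr ⟨fa (y z), Set.mem_image_of_mem _ hzt, ?_⟩
    rw [Metric.mem_ball, dist_eq_norm]
    have hxy : ‖fa x - fa (y z)‖ ^ 2 ≤ ‖x - y z‖ * ‖g x - g (y z)‖ := by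
      have := aux_sq_le f (x - y z)
      rw [← hfa] at this
      simp only [map_sub] at this; exact this
    have hx1 : ‖x‖ ≤ 1 := by simpa using Metric.mem_closedBall.mp hx
    have hy1' : ‖y z‖ ≤ 1 := by simpa using Metric.mem_closedBall.mp hy1
    have hb : ‖x - y z‖ ≤ 2 := by
      calc ‖x - y z‖ ≤ ‖x‖ + ‖y z‖ := norm_sub_le _ _
        _ ≤ 2 := by linarith
    have hgd : ‖g x - g (y z)‖ < ε ^ 2 / 4 := by
      rw [hy2]; rw [dist_eq_norm] at hdz; exact hdz
    nlinarith [norm_nonneg (fa x - fa (y z)), norm_nonneg (g x - g (y z)),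
      norm_nonneg (x - y z)]
  refine ⟨closure (⇑fa '' Metric.closedBall 0 1),
    TotallyBounded.isCompact_of_isClosed htb.closure isClosed_closure, ?_⟩
  refine Filter.mem_of_superset (Metric.closedBall_mem_nhds (0 : H) one_pos) ?_
  intro x hx
  exact subset_closure (Set.mem_image_of_mem _ hx)

lemma aux_comp_continuous {A C : B → H →L[ℂ] H}
    (hAs : ∀ x : H, Continuous fun b => A b x) (hA1 : ∀ b, ‖A b‖ ≤ 1)
    (hCc : ∀ b, IsCompactOperator ⇑(C b)) (hC : Continuous C) :
    Continuous fun b => A b ∘L C b := by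
  rw [continuous_iff_continuousAt]
  intro b₀
  rw [ContinuousAt, Metric.tendsto_nhds]
  intro ε hε
  set Q := closure (⇑(C b₀) '' Metric.closedBall 0 1) with hQdef
  have hQ : IsCompact Q := (hCc b₀).isCompact_closure_image_closedBall 1
  obtain ⟨t, htsub, htfin, hcover⟩ := totallyBounded_iff_subset.mp hQ.totallyBounded
    {p : H × H | dist p.1 p.2 < ε / 8} (dist_mem_uniformity (by positivity))
  have h1 : ∀ᶠ b in nhds b₀, ∀ z ∈ t, ‖A b z - A b₀ z‖ < ε / 8 := by
    rw [Filter.eventually_all_finite htfin]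
    intro z hz
    have := (hAs z).continuousAt (x := b₀)
    rw [ContinuousAt, Metric.tendsto_nhds] at this
    filter_upwards [this (ε / 8) (by positivity)] with b hb
    rw [dist_eq_norm] at hb; exact hb
  have h2 : ∀ᶠ b in nhds b₀, ‖C b - C b₀‖ < ε / 4 := by
    have := hC.continuousAt (x := b₀)
    rw [ContinuousAt, Metric.tendsto_nhds] at this
    filter_upwards [this (ε / 4) (by positivity)] with b hb
    rw [dist_eq_norm] at hb; exact hb
  filter_upwards [h1, h2] with b hb1 hb2
  have hAbound : ‖A b - A b₀‖ ≤ 2 := by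
    calc ‖A b - A b₀‖ ≤ ‖A b‖ + ‖A b₀‖ := norm_sub_le _ _
      _ ≤ 2 := by linarith [hA1 b, hA1 b₀]
  have hQest : ∀ z ∈ Q, ‖(A b - A b₀) z‖ ≤ ε / 2 := by
    intro z hzQ
    have := hcover hzQ
    simp only [Set.mem_iUnion, Set.mem_setOf_eq] at this
    obtain ⟨c, hct, hdc⟩ := this
    rw [dist_eq_norm] at hdc
    calc ‖(A b - A b₀) z‖
        = ‖(A b - A b₀) (z - c) + (A b - A b₀) c‖ := by rw [map_sub, sub_add_cancel]
      _ ≤ ‖(A b - A b₀) (z - c)‖ + ‖(A b - A b₀) c‖ := norm_add_le _ _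
      _ ≤ ‖A b - A b₀‖ * ‖z - c‖ + ‖(A b - A b₀) c‖ := by
          gcongr; exact le_opNorm _ _
      _ ≤ 2 * (ε / 8) + ε / 8 := by
          have hc' : ‖(A b - A b₀) c‖ ≤ ε / 8 := by
            simpa only [ContinuousLinearMap.sub_apply] using (hb1 c hct).le
          have hzc : ‖A b - A b₀‖ * ‖z - c‖ ≤ 2 * (ε / 8) :=
            mul_le_mul hAbound hdc.le (norm_nonneg _) (by norm_num)
          exact add_le_add hzc hc'
      _ ≤ ε / 2 := by linarith
  have hfinal1 : ‖(A b - A b₀) ∘L C b₀‖ ≤ ε / 2 := by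
    refine opNorm_le_bound _ (by positivity) fun x => ?_
    rcases eq_or_ne x 0 with rfl | hx
    · simp
    · have hnx : (0 : ℝ) < ‖x‖ := norm_pos_iff.mpr hx
      set z : H := (‖x‖ : ℝ)⁻¹ • x with hzdef
      have hz1 : ‖z‖ ≤ 1 := by
        rw [hzdef, norm_smul, norm_inv, norm_norm, inv_mul_cancel₀ hnx.ne']
      have hzQ : C b₀ z ∈ Q := subset_closure (Set.mem_image_of_mem _ (by
        simpa [Metric.mem_closedBall, dist_eq_norm] using hz1))
      have hxz : x = (‖x‖ : ℝ) • z := by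
        rw [hzdef, smul_smul, mul_inv_cancel₀ hnx.ne', one_smul]
      calc ‖((A b - A b₀) ∘L C b₀) x‖ = ‖((A b - A b₀) ∘L C b₀) ((‖x‖ : ℝ) • z)‖ := by rw [← hxz]
        _ = ‖x‖ * ‖(A b - A b₀) (C b₀ z)‖ := by
            simp only [ContinuousLinearMap.comp_apply, map_smul_of_tower, norm_smul,
              Real.norm_eq_abs]
            rw [abs_of_pos hnx]
        _ ≤ ‖x‖ * (ε / 2) := by gcongr; exact hQest _ hzQ
        _ = ε / 2 * ‖x‖ := by ring
  rw [dist_eq_norm]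
  have hsplit : A b ∘L C b - A b₀ ∘L C b₀
      = A b ∘L (C b - C b₀) + (A b - A b₀) ∘L C b₀ := by
    ext x
    simp only [ContinuousLinearMap.sub_apply, ContinuousLinearMap.comp_apply,
      ContinuousLinearMap.add_apply, map_sub]
    abel
  rw [hsplit]
  calc ‖A b ∘L (C b - C b₀) + (A b - A b₀) ∘L C b₀‖
      ≤ ‖A b ∘L (C b - C b₀)‖ + ‖(A b - A b₀) ∘L C b₀‖ := norm_add_le _ _
    _ ≤ ‖A b‖ * ‖C b - C b₀‖ + ε / 2 := by gcongr; exact opNorm_comp_le _ _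
    _ ≤ 1 * (ε / 4) + ε / 2 :=
        add_le_add (mul_le_mul (hA1 b) hb2.le (norm_nonneg _) zero_le_one) le_rfl
    _ < ε := by linarith

end AuxResolvent

/-- Lemma 1.2: if the resolvents of the self-adjoint family `D b` are strongly continuous,
`K b` is symmetric with `dom (D b) ⊆ dom (K b)`, `D b + K b` (with domain `dom (D b)`) is
self-adjoint, and `K b (D b + i)⁻¹` is compact and norm-continuous in `b`, then the
differences of the resolvents of `D b + K b` and of `D b` are compact and norm-continuous. -/
theorem resolvent_difference_compact_continuous
    {H : Type*} [NormedAddCommGroup H] [InnerProductSpace ℂ H] [CompleteSpace H]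
    [TopologicalSpace.SeparableSpace H]
    {B : Type*} [TopologicalSpace B] [CompactSpace B] [T2Space B]
    -- the self-adjoint family `D` with strongly continuous resolvents `R₊, R₋`
    (D : B → (H →ₗ.[ℂ] H)) (hsa : ∀ b, IsSelfAdjoint (D b))
    (Rp Rm : B → (H →L[ℂ] H))
    (hRp1 : ∀ b (x : H), ∃ hx : Rp b x ∈ (D b).domain,
      D b ⟨Rp b x, hx⟩ + Complex.I • Rp b x = x)
    (hRp2 : ∀ b (y : (D b).domain), Rp b (D b y + Complex.I • (y : H)) = y)
    (hRm1 : ∀ b (x : H), ∃ hx : Rm b x ∈ (D b).domain,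
      D b ⟨Rm b x, hx⟩ - Complex.I • Rm b x = x)
    (hRm2 : ∀ b (y : (D b).domain), Rm b (D b y - Complex.I • (y : H)) = y)
    (hRpcont : ∀ x : H, Continuous fun b => Rp b x)
    (hRmcont : ∀ x : H, Continuous fun b => Rm b x)
    -- the symmetric perturbations `K b` with `dom (D b) ⊆ dom (K b)`
    (K : B → (H →ₗ.[ℂ] H))
    (hKsymm : ∀ b (u v : (K b).domain),
      (inner ℂ (K b u) (v : H) : ℂ) = inner ℂ (u : H) (K b v))
    (hdom : ∀ b, (D b).domain ≤ (K b).domain)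
    -- `D b + K b` (whose domain is `dom (D b) ⊓ dom (K b) = dom (D b)`) is self-adjoint,
    -- with resolvents `R'₊, R'₋`
    (hsa' : ∀ b, IsSelfAdjoint (D b + K b))
    (Rp' Rm' : B → (H →L[ℂ] H))
    (hRp'1 : ∀ b (x : H), ∃ hx : Rp' b x ∈ (D b + K b).domain,
      (D b + K b) ⟨Rp' b x, hx⟩ + Complex.I • Rp' b x = x)
    (hRp'2 : ∀ b (y : (D b + K b).domain),
      Rp' b ((D b + K b) y + Complex.I • (y : H)) = y)
    (hRm'1 : ∀ b (x : H), ∃ hx : Rm' b x ∈ (D b + K b).domain,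
      (D b + K b) ⟨Rm' b x, hx⟩ - Complex.I • Rm' b x = x)
    (hRm'2 : ∀ b (y : (D b + K b).domain),
      Rm' b ((D b + K b) y - Complex.I • (y : H)) = y)
    -- `T b = K b ∘ R₊ b` is a compact operator depending norm-continuously on `b`
    (T : B → (H →L[ℂ] H))
    (hT : ∀ b (x : H), ∃ hx : Rp b x ∈ (K b).domain, T b x = K b ⟨Rp b x, hx⟩)
    (hTcompact : ∀ b, IsCompactOperator (T b))
    (hTcont : Continuous T) :
    (∀ b, IsCompactOperator (Rp' b - Rp b) ∧ IsCompactOperator (Rm' b - Rm b)) ∧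
      Continuous (fun b => Rp' b - Rp b) ∧ Continuous (fun b => Rm' b - Rm b) := by
  classical
  -- symmetry of `D b` and of `D b + K b`
  have hDsymm : ∀ b, ∀ u v : (D b).domain,
      (inner ℂ (D b u) (v : H) : ℂ) = inner ℂ (u : H) (D b v) := by
    intro b
    have h := LinearPMap.adjoint_isFormalAdjoint (hsa b).dense_domain
    rw [LinearPMap.isSelfAdjoint_def.mp (hsa b)] at h
    exact fun u v => h u v
  have hDKsymm : ∀ b, ∀ u v : (D b + K b).domain,
      (inner ℂ ((D b + K b) u) (v : H) : ℂ) = inner ℂ (u : H) ((D b + K b) v) := by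
    intro b
    have h := LinearPMap.adjoint_isFormalAdjoint (hsa' b).dense_domain
    rw [LinearPMap.isSelfAdjoint_def.mp (hsa' b)] at h
    exact fun u v => h u v
  -- norm bound for `Rp`
  have hRpnorm : ∀ b, ‖Rp b‖ ≤ 1 := by
    intro b
    refine opNorm_le_bound _ zero_le_one fun x => ?_
    obtain ⟨hx, he⟩ := hRp1 b x
    rw [one_mul]
    exact aux_norm_le (hDsymm b) Complex.norm_I Complex.I_re ⟨Rp b x, hx⟩ x he
  -- domain facts
  have hmemDK : ∀ b (u : H), u ∈ (D b).domain → u ∈ (D b + K b).domain := by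
    intro b u hu
    rw [LinearPMap.add_domain]
    exact Submodule.mem_inf.mpr ⟨hu, hdom b hu⟩
  have haddapply : ∀ b (u : H) (hu : u ∈ (D b).domain) (huK : u ∈ (K b).domain)
      (h2 : u ∈ (D b + K b).domain),
      (D b + K b) ⟨u, h2⟩ = D b ⟨u, hu⟩ + K b ⟨u, huK⟩ := by
    intro b u hu huK h2
    exact LinearPMap.add_apply (D b) (K b) ⟨u, h2⟩
  -- the second resolvent identity `Rp' b * (1 + T b) = Rp b`
  have hid : ∀ b, Rp' b * (1 + T b) = Rp b := by
    intro b
    ext x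
    obtain ⟨hu, hue⟩ := hRp1 b x
    obtain ⟨hxT, hTeq⟩ := hT b x
    have huK : Rp b x ∈ (K b).domain := hdom b hu
    have hmem : Rp b x ∈ (D b + K b).domain := hmemDK b _ hu
    have heq : (D b + K b) ⟨Rp b x, hmem⟩ + Complex.I • Rp b x = x + T b x := by
      rw [haddapply b _ hu huK hmem, hTeq, add_right_comm, hue]
    have hkey : Rp' b ((D b + K b) ⟨Rp b x, hmem⟩ + Complex.I • Rp b x) = Rp b x :=
      hRp'2 b ⟨Rp b x, hmem⟩
    rw [heq] at hkey
    have hstep : (Rp' b * (1 + T b)) x = Rp' b (x + T b x) := by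
      simp [ContinuousLinearMap.mul_apply, ContinuousLinearMap.add_apply,
        ContinuousLinearMap.one_apply]
    rw [hstep, hkey]
  -- `1 + T b` is bijective
  have hbij : ∀ b, ∃ e : H ≃L[ℂ] H, (e : H →L[ℂ] H) = 1 + T b := by
    intro b
    have hker : (1 + T b : H →L[ℂ] H).ker = ⊥ := by
      refine LinearMap.ker_eq_bot'.mpr fun x hx0 => ?_
      have hx0' : x + T b x = 0 := by
        simpa [ContinuousLinearMap.add_apply, ContinuousLinearMap.one_apply] using hx0
      obtain ⟨hu, hue⟩ := hRp1 b x
      obtain ⟨hxT, hTeq⟩ := hT b x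
      have huK : Rp b x ∈ (K b).domain := hdom b hu
      have hmem : Rp b x ∈ (D b + K b).domain := hmemDK b _ hu
      have heq : (D b + K b) ⟨Rp b x, hmem⟩ + Complex.I • Rp b x = x + T b x := by
        rw [haddapply b _ hu huK hmem, hTeq, add_right_comm, hue]
      have hkey : Rp' b ((D b + K b) ⟨Rp b x, hmem⟩ + Complex.I • Rp b x) = Rp b x :=
        hRp'2 b ⟨Rp b x, hmem⟩
      rw [heq, hx0', map_zero] at hkey
      -- hkey : 0 = Rp b x
      have hu0 : Rp b x = 0 := hkey.symm
      have hz : (⟨Rp b x, hu⟩ : (D b).domain) = 0 := Subtype.ext hu0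
      have : x = D b ⟨Rp b x, hu⟩ + Complex.I • Rp b x := hue.symm
      rw [hz, LinearPMap.map_zero, hu0] at this
      simpa using this
    have hrange : (1 + T b : H →L[ℂ] H).range = ⊤ := by
      refine LinearMap.range_eq_top.mpr fun y => ?_
      obtain ⟨hu', hue'⟩ := hRp'1 b y
      have hu'' := hu'
      rw [LinearPMap.add_domain, Submodule.mem_inf] at hu''
      obtain ⟨hu1, hu2⟩ := hu''
      set x : H := D b ⟨Rp' b y, hu1⟩ + Complex.I • Rp' b y with hxdef
      have hRpx : Rp b x = Rp' b y := hRp2 b ⟨Rp' b y, hu1⟩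
      obtain ⟨hxT, hTeq⟩ := hT b x
      have hKeq : K b ⟨Rp b x, hxT⟩ = K b ⟨Rp' b y, hu2⟩ := by
        congr 1
        exact Subtype.ext hRpx
      refine ⟨x, ?_⟩
      have hgoal : x + T b x = y := by
        rw [hTeq, hKeq, hxdef, add_right_comm]
        rw [← haddapply b _ hu1 hu2 hu']
        exact hue'
      simpa [ContinuousLinearMap.add_apply, ContinuousLinearMap.one_apply] using hgoal
    exact ⟨ContinuousLinearEquiv.ofBijective (1 + T b) hker hrange,
      ContinuousLinearEquiv.coe_ofBijective _ _ _⟩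
  have hunit : ∀ b, IsUnit (1 + T b) := by
    intro b
    obtain ⟨e, he⟩ := hbij b
    exact ⟨e.toUnit, he⟩
  set inv : B → H →L[ℂ] H := fun b => Ring.inverse (1 + T b) with hinvdef
  have hinvmul : ∀ b, (1 + T b) * inv b = 1 := fun b => Ring.mul_inverse_cancel _ (hunit b)
  have hmulinv : ∀ b, inv b * (1 + T b) = 1 := fun b => Ring.inverse_mul_cancel _ (hunit b)
  have hRp'eq : ∀ b, Rp' b = Rp b * inv b := by
    intro b
    calc Rp' b = Rp' b * ((1 + T b) * inv b) := by rw [hinvmul b, mul_one]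
      _ = (Rp' b * (1 + T b)) * inv b := (mul_assoc _ _ _).symm
      _ = Rp b * inv b := by rw [hid b]
  have hSeq : ∀ b, Rp' b - Rp b = Rp b * (inv b - 1) := by
    intro b
    rw [hRp'eq b, mul_sub, mul_one]
  have hinvcont : Continuous inv := by
    rw [continuous_iff_continuousAt]
    intro b₀
    have h1 : ContinuousAt (fun y : H →L[ℂ] H => Ring.inverse y) (1 + T b₀) := by
      obtain ⟨u, hu⟩ := hunit b₀
      exact hu ▸ NormedRing.inverse_continuousAt u
    have h2 : ContinuousAt (fun b => 1 + T b) b₀ := (continuous_const.add hTcont).continuousAt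
    exact ContinuousAt.comp (g := fun y : H →L[ℂ] H => Ring.inverse y)
      (f := fun b => 1 + T b) h1 h2
  have hCdef : ∀ b, inv b - 1 = -(inv b * T b) := by
    intro b
    calc inv b - 1 = inv b * 1 - inv b * (1 + T b) := by rw [mul_one, hmulinv b]
      _ = -(inv b * T b) := by rw [mul_one, mul_add, mul_one]; abel
  have hCcompact : ∀ b, IsCompactOperator ⇑(inv b - 1) := by
    intro b
    rw [hCdef b]
    have h : IsCompactOperator (⇑(inv b) ∘ ⇑(T b)) := (hTcompact b).clm_comp (inv b)
    have h2 : IsCompactOperator ⇑(inv b * T b) := h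
    exact h2.neg
  have hCcont : Continuous fun b => inv b - 1 := hinvcont.sub continuous_const
  have hScompact : ∀ b, IsCompactOperator ⇑(Rp' b - Rp b) := by
    intro b
    rw [hSeq b]
    exact (hCcompact b).clm_comp (Rp b)
  have hScont : Continuous fun b => Rp' b - Rp b := by
    have heq : (fun b => Rp' b - Rp b) = fun b => Rp b ∘L (inv b - 1) := by
      funext b
      rw [hSeq b]
      rfl
    rw [heq]
    exact aux_comp_continuous hRpcont hRpnorm hCcompact hCcont
  -- the minus resolvents are the adjoints
  have hRmadj : ∀ b, Rm b = ContinuousLinearMap.adjoint (Rp b) := fun b =>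
    aux_adj (hDsymm b) (hRp1 b) (hRm1 b)
  have hRm'adj : ∀ b, Rm' b = ContinuousLinearMap.adjoint (Rp' b) := fun b =>
    aux_adj (hDKsymm b) (hRp'1 b) (hRm'1 b)
  have hMeq : ∀ b, Rm' b - Rm b = ContinuousLinearMap.adjoint (Rp' b - Rp b) := by
    intro b
    rw [hRmadj b, hRm'adj b, map_sub]
  have hMcompact : ∀ b, IsCompactOperator ⇑(Rm' b - Rm b) := by
    intro b
    rw [hMeq b]
    exact aux_adjoint_compact (hScompact b)
  have hMcont : Continuous fun b => Rm' b - Rm b := by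
    have heq : (fun b => Rm' b - Rm b)
        = fun b => ContinuousLinearMap.adjoint (Rp' b - Rp b) := funext hMeq
    rw [heq]
    exact (ContinuousLinearMap.adjoint :
      (H →L[ℂ] H) ≃ₗᵢ⋆[ℂ] (H →L[ℂ] H)).continuous.comp hScont
  exact ⟨fun b => ⟨hScompact b, hMcompact b⟩, hScont, hMcont⟩
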